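/- Let A and B be C*-algebras and let (a_i)_{i∈I} be a family of elements of A that generates A as a C*-algebra. Equip the set E of injective star-algebra homomorphisms from A to B with the topology of pointwise norm convergence, i.e., the topology induced from the product topology on the function space A → B (where B carries its norm topology) via the map sending a homomorphism to its underlying function. Then the map E → B^I sending π to the tuple (π(a_i))_{i∈I}, where B^I carries the product topology, is a topological embedding onto its image; equivalently, it is injective and the topology on E is induced by this map (it is an inducing map). -/

import Mathlib

section Aux

variable {A B : Type*} [CStarAlgebra A] [CStarAlgebra B] {I : Type*}

private theorem aux_cont (a : I → A)
    (hdense : Dense ((StarAlgebra.adjoin ℂ (Set.range a)) : Set A)) (x : A) :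
    @Continuous {π : A →⋆ₐ[ℂ] B // Function.Injective π} B
      (TopologicalSpace.induced
        (fun (p : {π : A →⋆ₐ[ℂ] B // Function.Injective π}) (i : I) => p.1 (a i))
        Pi.topologicalSpace) _
      (fun p => p.1 x) := by
  set E := {π : A →⋆ₐ[ℂ] B // Function.Injective π}
  letI t2 : TopologicalSpace E :=
    TopologicalSpace.induced (fun (p : E) (i : I) => p.1 (a i)) Pi.topologicalSpace
  have hiso : ∀ p : E, Isometry (p.1 : A → B) := fun p =>
    NonUnitalStarAlgHom.isometry (p.1 : A →⋆ₐ[ℂ] B) p.2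
  set S : Set A := {x : A | Continuous (fun p : E => p.1 x)} with hSdef
  have hclosed : IsClosed S := by
    rw [← closure_subset_iff_isClosed]
    intro x hx
    haveI : (nhdsWithin x S).NeBot := mem_closure_iff_nhdsWithin_neBot.mp hx
    show Continuous (fun p : E => p.1 x)
    have hTU : TendstoUniformly (fun (y : A) (p : E) => p.1 y)
        (fun p : E => p.1 x) (nhdsWithin x S) := by
      rw [Metric.tendstoUniformly_iff]
      intro ε hε
      filter_upwards [nhdsWithin_le_nhds (Metric.ball_mem_nhds x hε)] with y hy p
      rw [(hiso p).dist_eq x y]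
      rwa [Metric.mem_ball, dist_comm] at hy
    refine hTU.continuous (Filter.Eventually.frequently ?_)
    filter_upwards [self_mem_nhdsWithin] with y hy
    exact hy
  have hsub : ((StarAlgebra.adjoin ℂ (Set.range a)) : Set A) ⊆ S := by
    intro x hx
    induction hx using StarAlgebra.adjoin_induction with
    | mem x hx =>
      obtain ⟨i, rfl⟩ := hx
      show Continuous (fun p : E => p.1 (a i))
      exact (continuous_apply i).comp
        (@continuous_induced_dom E (I → B) (fun (p : E) (i : I) => p.1 (a i))
          Pi.topologicalSpace)
    | algebraMap r =>
      show Continuous (fun p : E => p.1 (algebraMap ℂ A r))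
      simp only [AlgHomClass.commutes]
      exact continuous_const
    | add x y hx hy hx' hy' =>
      show Continuous (fun p : E => p.1 (x + y))
      simp only [map_add]
      exact Continuous.add hx' hy'
    | mul x y hx hy hx' hy' =>
      show Continuous (fun p : E => p.1 (x * y))
      simp only [map_mul]
      exact Continuous.mul hx' hy'
    | star x hx hx' =>
      show Continuous (fun p : E => p.1 (star x))
      simp only [map_star]
      exact Continuous.star hx'
  have hx : x ∈ S := by
    have h1 : closure ((StarAlgebra.adjoin ℂ (Set.range a)) : Set A) ⊆ S :=
      hclosed.closure_subset_iff.mpr hsub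
    rw [hdense.closure_eq] at h1
    exact h1 (Set.mem_univ x)
  exact hx

private theorem aux_embedding (a : I → A)
    (hgen : (StarAlgebra.adjoin ℂ (Set.range a)).topologicalClosure = ⊤) :
    @Topology.IsEmbedding _ _
      (TopologicalSpace.induced
        (fun p : {π : A →⋆ₐ[ℂ] B // Function.Injective π} => (⇑p.1 : A → B))
        Pi.topologicalSpace) _
      (fun (p : {π : A →⋆ₐ[ℂ] B // Function.Injective π}) (i : I) => p.1 (a i)) := by
  set E := {π : A →⋆ₐ[ℂ] B // Function.Injective π}
  have hdense : Dense ((StarAlgebra.adjoin ℂ (Set.range a)) : Set A) := by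
    rw [dense_iff_closure_eq, ← StarSubalgebra.topologicalClosure_coe, hgen]
    rfl
  have hiso : ∀ p : E, Isometry (p.1 : A → B) := fun p =>
    NonUnitalStarAlgHom.isometry (p.1 : A →⋆ₐ[ℂ] B) p.2
  letI t1 : TopologicalSpace E :=
    TopologicalSpace.induced (fun p : E => (⇑p.1 : A → B)) Pi.topologicalSpace
  refine ⟨⟨?_⟩, ?_⟩
  · -- equality of topologies
    apply le_antisymm
    · calc TopologicalSpace.induced (fun p : E => (⇑p.1 : A → B)) Pi.topologicalSpace
          ≤ TopologicalSpace.induced (fun p : E => (⇑p.1 : A → B))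
              (TopologicalSpace.induced (fun (f : A → B) (i : I) => f (a i))
                Pi.topologicalSpace) := by
            refine induced_mono ?_
            rw [← continuous_iff_le_induced]
            exact continuous_pi fun i => continuous_apply (a i)
        _ = TopologicalSpace.induced (fun (p : E) (i : I) => p.1 (a i)) Pi.topologicalSpace :=
            induced_compose
    · have hc : @Continuous E (A → B)
          (TopologicalSpace.induced (fun (p : E) (i : I) => p.1 (a i)) Pi.topologicalSpace)
          Pi.topologicalSpace (fun p : E => (⇑p.1 : A → B)) := by
        letI : TopologicalSpace E :=
          TopologicalSpace.induced (fun (p : E) (i : I) => p.1 (a i)) Pi.topologicalSpace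
        exact continuous_pi fun x => aux_cont a hdense x
      exact continuous_iff_le_induced.mp hc
  · -- injectivity
    intro p q h
    have hxa : ∀ i, p.1 (a i) = q.1 (a i) := fun i => congrFun h i
    have heq : (⇑p.1 : A → B) = ⇑q.1 := by
      refine Continuous.ext_on hdense (hiso p).continuous (hiso q).continuous ?_
      intro x hx
      induction hx using StarAlgebra.adjoin_induction with
      | mem x hx => obtain ⟨i, rfl⟩ := hx; exact hxa i
      | algebraMap r => simp only [AlgHomClass.commutes]
      | add x y hx hy hx' hy' => simp only [map_add, hx', hy']
      | mul x y hx hy hx' hy' => simp only [map_mul, hx', hy']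
      | star x hx hx' => simp only [map_star, hx']
    exact Subtype.ext (DFunLike.coe_injective heq)

end Aux

/-- Let A and B be C*-algebras and (a_i)_{i∈I} a family generating A as a C*-algebra. Equip
the set E of injective star-algebra homomorphisms A → B with the topology of pointwise norm
convergence (induced from the product topology on A → B, B with its norm topology). Then the
map E → B^I, π ↦ (π(a_i))_{i∈I}, is a topological embedding (injective and inducing). -/
theorem stmt1 {A B : Type*} [CStarAlgebra A] [CStarAlgebra B] {I : Type*} (a : I → A)
    (hgen : (StarAlgebra.adjoin ℂ (Set.range a)).topologicalClosure = ⊤) :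
    letI : TopologicalSpace {π : A →⋆ₐ[ℂ] B // Function.Injective π} :=
      TopologicalSpace.induced (fun p => (⇑p.1 : A → B)) Pi.topologicalSpace
    Topology.IsEmbedding fun (p : {π : A →⋆ₐ[ℂ] B // Function.Injective π}) (i : I) => p.1 (a i) := by
  exact aux_embedding a hgen
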